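/- In the regret game, every pure strategy Nash equilibrium is symmetric: there is no pure strategy Nash equilibrium a in which some player i chooses safe while another player j chooses risky. Consequently, the only candidate pure strategy Nash equilibria are the all-safe profile and the all-risky profile. -/
import Mathlib


namespace RegretGame

/-- An action in the regret game: choose the risky lottery or the safe lottery. -/
inductive Act : Type
  | risky : Act
  | safe : Act
deriving DecidableEq, Repr

/-- `numRisky a i` is the number of players other than `i` choosing the risky lottery
at the action profile `a`. -/
def numRisky {N : ℕ} (a : Fin N → Act) (i : Fin N) : ℕ :=
  (Finset.univ.filter (fun j => j ≠ i ∧ a j = Act.risky)).card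

/-- Player `i`'s expected payoff in the regret game at action profile `a`, given the
success probability `p`, coefficient of regret aversion `κ`, normalized good-state
payoff `v` of the risky lottery, and the information function `q` (the probability of
learning the risky outcome, as a function of how many of the others chose risky). -/
noncomputable def payoff {N : ℕ} (p κ v : ℝ) (q : ℕ → ℝ)
    (a : Fin N → Act) (i : Fin N) : ℝ :=
  if a i = Act.risky then p * v - (1 - p) * κ
  else 1 - p * q (numRisky a i) * κ * (v - 1)

/-- A pure strategy Nash equilibrium of the regret game: no player can strictly
increase her expected payoff by unilaterally changing her own action. -/
def IsNash {N : ℕ} (p κ v : ℝ) (q : ℕ → ℝ) (a : Fin N → Act) : Prop :=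
  ∀ (i : Fin N) (b : Act),
    payoff p κ v q (Function.update a i b) i ≤ payoff p κ v q a i

lemma numRisky_update {N : ℕ} (a : Fin N → Act) (i : Fin N) (b : Act) :
    numRisky (Function.update a i b) i = numRisky a i := by
  unfold numRisky
  congr 1
  apply Finset.filter_congr
  intro k _
  by_cases h : k = i
  · simp [h]
  · simp [h, Function.update_of_ne h]

/-- Every pure strategy Nash equilibrium of the regret game is symmetric: there is no
equilibrium in which some player chooses safe while another chooses risky; hence every
pure strategy Nash equilibrium is either the all-safe profile or the all-risky
profile. -/
theorem regret_game_nash_symmetric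
    (N : ℕ) (hN : 2 ≤ N) (p κ v : ℝ)
    (hp : 0 < p ∧ p < 1) (hκ : 0 < κ) (hv : 1 < v)
    (q : ℕ → ℝ)
    (hq01 : ∀ m ≤ N - 1, 0 ≤ q m ∧ q m ≤ 1)
    (hq0 : q 0 = 0) (hqN : q (N - 1) = 1)
    (hqmono : ∀ m₁ m₂, m₁ < m₂ → m₂ ≤ N - 1 → q m₁ < q m₂) :
    (∀ a : Fin N → Act, IsNash p κ v q a →
        ¬ ∃ i j : Fin N, a i = Act.safe ∧ a j = Act.risky) ∧
    (∀ a : Fin N → Act, IsNash p κ v q a →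
        (a = fun _ : Fin N => Act.safe) ∨ (a = fun _ : Fin N => Act.risky)) := by
  have main : ∀ a : Fin N → Act, IsNash p κ v q a →
      ¬ ∃ i j : Fin N, a i = Act.safe ∧ a j = Act.risky := by
    rintro a hNash ⟨i, j, hi, hj⟩
    have hij : j ≠ i := by rintro rfl; rw [hi] at hj; exact Act.noConfusion hj
    set T : Finset (Fin N) := Finset.univ.filter (fun k => a k = Act.risky) with hT
    have hSi : numRisky a i = T.card := by
      unfold numRisky
      congr 1
      ext k
      simp only [hT, Finset.mem_filter, Finset.mem_univ, true_and]
      constructor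
      · exact fun h => h.2
      · intro h
        refine ⟨?_, h⟩
        rintro rfl
        rw [hi] at h
        exact Act.noConfusion h
    have hSj : numRisky a j = (T.erase j).card := by
      unfold numRisky
      congr 1
      ext k
      simp only [hT, Finset.mem_filter, Finset.mem_univ, true_and, Finset.mem_erase]
    have hjT : j ∈ T := by simp [hT, hj]
    have hsucc : numRisky a j + 1 = numRisky a i := by
      rw [hSi, hSj, Finset.card_erase_add_one hjT]
    have hmN : numRisky a i ≤ N - 1 := by
      have hsub : T ⊆ Finset.univ.erase i := by
        intro k hk
        simp only [hT, Finset.mem_filter, Finset.mem_univ, true_and] at hk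
        simp only [Finset.mem_erase, Finset.mem_univ, and_true]
        rintro rfl
        rw [hi] at hk
        exact Act.noConfusion hk
      have := Finset.card_le_card hsub
      rw [hSi]
      simpa using this
    have hqlt : q (numRisky a j) < q (numRisky a i) :=
      hqmono _ _ (by omega) hmN
    have h1 := hNash i Act.risky
    have h2 := hNash j Act.safe
    rw [payoff, payoff, Function.update_self, hi] at h1
    rw [payoff, payoff, Function.update_self, numRisky_update, hj] at h2
    simp only [if_true, reduceCtorEq, if_false] at h1 h2
    nlinarith [mul_pos (mul_pos (mul_pos hp.1 hκ) (sub_pos.mpr hv)) (sub_pos.mpr hqlt)]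
  refine ⟨main, fun a hNash => ?_⟩
  by_cases hs : ∀ k, a k = Act.safe
  · exact Or.inl (funext hs)
  · push_neg at hs
    obtain ⟨j, hj⟩ := hs
    have hjr : a j = Act.risky := by cases h : a j <;> simp_all
    right
    funext k
    cases h : a k with
    | risky => rfl
    | safe => exact absurd ⟨k, j, h, hjr⟩ (main a hNash)

end RegretGame
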